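/- Coercivity: let Π be a T-isometric involution and S a T-non-expansive matrix on ℂ^M (finite-dimensional) such that Id + ΠS is injective. Then there exists α > 0 such that Re((p, (Id + ΠS)p)_T) ≥ α ‖p‖_T² for all p ∈ ℂ^M. -/

import Mathlib

open Matrix ComplexOrder

/-- Coercivity: if `Ex` is a `T`-isometric involution, `S` is `T`-non-expansive and
`Id + Ex·S` is injective, then there is `α > 0` with
`Re((p,(Id + Ex·S)p)_T) ≥ α‖p‖_T²` for all `p`, where `(x,y)_T = ȳᵀTx`. -/
theorem stmt8 {M : ℕ} (T Ex S : Matrix (Fin M) (Fin M) ℂ) (hT : T.PosDef)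
    (hEx : Ex * Ex = 1)
    (hExIso : ∀ x : Fin M → ℂ,
      (star (Ex *ᵥ x) ⬝ᵥ T *ᵥ (Ex *ᵥ x)).re = (star x ⬝ᵥ T *ᵥ x).re)
    (hSne : ∀ x : Fin M → ℂ,
      (star (S *ᵥ x) ⬝ᵥ T *ᵥ (S *ᵥ x)).re ≤ (star x ⬝ᵥ T *ᵥ x).re)
    (hinj : Function.Injective (1 + Ex * S).mulVec) :
    ∃ α > (0:ℝ), ∀ p : Fin M → ℂ,
      α * (star p ⬝ᵥ T *ᵥ p).re ≤ (star ((1 + Ex * S) *ᵥ p) ⬝ᵥ T *ᵥ p).re := by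
  set A : Matrix (Fin M) (Fin M) ℂ := 1 + Ex * S with hAdef
  set n : (Fin M → ℂ) → ℝ := fun p => (star p ⬝ᵥ T *ᵥ p).re with hn
  set f : (Fin M → ℂ) → ℝ := fun p => (star (A *ᵥ p) ⬝ᵥ T *ᵥ p).re with hf
  -- symmetry of the real part
  have hsym : ∀ x y : Fin M → ℂ, (star x ⬝ᵥ T *ᵥ y).re = (star y ⬝ᵥ T *ᵥ x).re := by
    intro x y
    have h1 : star (star x ⬝ᵥ T *ᵥ y) = star y ⬝ᵥ T *ᵥ x := by
      rw [star_dotProduct, star_star, star_mulVec, ← dotProduct_mulVec, hT.isHermitian.eq]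
    calc (star x ⬝ᵥ T *ᵥ y).re = (star (star x ⬝ᵥ T *ᵥ y)).re := (Complex.conj_re _).symm
      _ = (star y ⬝ᵥ T *ᵥ x).re := by rw [h1]
  -- key identity : 2 * f p = (n p - n (ExS p)) + n (A p)
  have hkey : ∀ p : Fin M → ℂ, 2 * f p = (n p - n ((Ex*S) *ᵥ p)) + n (A *ᵥ p) := by
    intro p
    have hexp : n (A *ᵥ p) = n p + n ((Ex*S) *ᵥ p) + 2 * (star ((Ex*S) *ᵥ p) ⬝ᵥ T *ᵥ p).re := by
      simp only [hn, hAdef, add_mulVec, one_mulVec, star_add, add_dotProduct,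
        dotProduct_add, mulVec_add, Complex.add_re]
      rw [hsym p ((Ex*S) *ᵥ p)]
      ring
    have : f p = n p + (star ((Ex*S) *ᵥ p) ⬝ᵥ T *ᵥ p).re := by
      simp only [hf, hn, hAdef, add_mulVec, one_mulVec, star_add, add_dotProduct, Complex.add_re]
    rw [this, hexp]; ring
  -- nonneg and the contraction bound
  have hnn : ∀ p : Fin M → ℂ, 0 ≤ n p := by
    intro p
    rcases eq_or_ne p 0 with h | h
    · simp [hn, h]
    · have := hT.dotProduct_mulVec_pos h
      rw [Complex.lt_def] at this
      simpa [hn] using le_of_lt this.1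
  have hpos : ∀ x : Fin M → ℂ, x ≠ 0 → 0 < n x := by
    intro x hx
    have := hT.dotProduct_mulVec_pos hx
    rw [Complex.lt_def] at this
    simpa [hn] using this.1
  have hcontr : ∀ p : Fin M → ℂ, n ((Ex*S) *ᵥ p) ≤ n p := by
    intro p
    simp only [hn]
    rw [← mulVec_mulVec, hExIso (S *ᵥ p)]
    exact hSne p
  have hge : ∀ p : Fin M → ℂ, n (A *ᵥ p) ≤ 2 * f p := by
    intro p
    rw [hkey p]
    have := hcontr p
    linarith
  -- positivity for nonzero p
  have hfpos : ∀ p : Fin M → ℂ, p ≠ 0 → 0 < f p := by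
    intro p hp
    have hAp : A *ᵥ p ≠ 0 := by
      intro h
      apply hp
      apply hinj
      simpa [mulVec_zero] using h.trans (mulVec_zero A).symm
    have h1 := hpos _ hAp
    have h2 := hge p
    linarith
  -- homogeneity
  have hhomB : ∀ (B : Matrix (Fin M) (Fin M) ℂ) (c : ℝ) (p : Fin M → ℂ),
      (star (B *ᵥ ((c:ℂ) • p)) ⬝ᵥ T *ᵥ ((c:ℂ) • p)).re
        = c^2 * (star (B *ᵥ p) ⬝ᵥ T *ᵥ p).re := by
    intro B c p
    rw [mulVec_smul, mulVec_smul, star_smul, smul_dotProduct, dotProduct_smul]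
    simp only [star_trivial, RCLike.star_def, Complex.conj_ofReal, smul_eq_mul,
      Complex.re_ofReal_mul]
    ring
  have hhomn : ∀ (c : ℝ) (p : Fin M → ℂ), n ((c:ℂ) • p) = c^2 * n p := by
    intro c p
    have := hhomB 1 c p
    simpa [one_mulVec, hn] using this
  have hhomf : ∀ (c : ℝ) (p : Fin M → ℂ), f ((c:ℂ) • p) = c^2 * f p := by
    intro c p
    simpa [hf] using hhomB A c p
  -- continuity
  have hcontn : Continuous n := by
    apply Complex.continuous_re.comp
    exact Continuous.dotProduct continuous_id.star
      (Continuous.matrix_mulVec continuous_const continuous_id)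
  have hcontf : Continuous f := by
    apply Complex.continuous_re.comp
    exact Continuous.dotProduct
      ((Continuous.matrix_mulVec continuous_const continuous_id).star)
      (Continuous.matrix_mulVec continuous_const continuous_id)
  rcases Nat.eq_zero_or_pos M with hM | hM
  · refine ⟨1, one_pos, ?_⟩
    intro p
    subst hM
    have hp : p = 0 := Subsingleton.elim p 0
    subst hp
    simp
  · haveI : Nonempty (Fin M) := ⟨⟨0, hM⟩⟩
    have hK : IsCompact (Metric.sphere (0 : EuclideanSpace ℂ (Fin M)) 1) :=
      isCompact_sphere _ _
    have hne : (Metric.sphere (0 : EuclideanSpace ℂ (Fin M)) 1).Nonempty :=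
      NormedSpace.sphere_nonempty.2 zero_le_one
    have hceq : Continuous fun p : EuclideanSpace ℂ (Fin M) => (p : Fin M → ℂ) :=
      PiLp.continuous_ofLp 2 (fun _ : Fin M => ℂ)
    have hsz : ∀ p : EuclideanSpace ℂ (Fin M),
        p ∈ Metric.sphere (0 : EuclideanSpace ℂ (Fin M)) 1 → (p : Fin M → ℂ) ≠ 0 := by
      intro p hp h0
      have : p = 0 := WithLp.ofLp_injective 2 h0
      rw [this] at hp
      simp at hp
    have hcr : ContinuousOn (fun p : EuclideanSpace ℂ (Fin M) => f p / n p)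
        (Metric.sphere (0 : EuclideanSpace ℂ (Fin M)) 1) := by
      apply ContinuousOn.div
      · exact (hcontf.comp hceq).continuousOn
      · exact (hcontn.comp hceq).continuousOn
      · intro p hp
        exact ne_of_gt (hpos p (hsz p hp))
    obtain ⟨u, hu, humin⟩ := hK.exists_isMinOn hne hcr
    have hun : (u : Fin M → ℂ) ≠ 0 := hsz u hu
    have hnu : 0 < n u := hpos u hun
    have hfu : 0 < f u := hfpos u hun
    refine ⟨f u / n u, div_pos hfu hnu, ?_⟩
    intro p
    rcases eq_or_ne p 0 with hp | hp
    · subst hp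
      simp
    · set P : EuclideanSpace ℂ (Fin M) := (WithLp.equiv 2 (Fin M → ℂ)).symm p with hP
      have hPne : P ≠ 0 := by
        intro h
        exact hp (congrArg (WithLp.equiv 2 (Fin M → ℂ)) h)
      set c : ℝ := ‖P‖ with hc
      have hcpos : 0 < c := norm_pos_iff.2 hPne
      set u' : EuclideanSpace ℂ (Fin M) := c⁻¹ • P with hu'
      have hu'mem : u' ∈ Metric.sphere (0 : EuclideanSpace ℂ (Fin M)) 1 := by
        rw [mem_sphere_zero_iff_norm, hu', norm_smul]
        simp [hc, abs_of_pos (inv_pos.2 hcpos), inv_mul_cancel₀ (ne_of_gt hcpos)]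
        exact inv_mul_cancel₀ (ne_of_gt hcpos)
      have hu'fun : (u' : Fin M → ℂ) = ((c⁻¹ : ℝ) : ℂ) • p := by
        funext i
        simp [hu', hP, Complex.real_smul, PiLp.smul_apply]
      have hmin := isMinOn_iff.mp humin u' hu'mem
      have hnu' : 0 < n u' := hpos u' (hsz u' hu'mem)
      have h1 : f u / n u * n u' ≤ f u' := (le_div_iff₀ hnu').mp hmin
      show f u / n u * n p ≤ f p
      have hfu' : f (u' : Fin M → ℂ) = (c⁻¹)^2 * f p := by
        rw [hu'fun, hhomf]
      have hnu'' : n (u' : Fin M → ℂ) = (c⁻¹)^2 * n p := by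
        rw [hu'fun, hhomn]
      have hk : (0:ℝ) < (c⁻¹)^2 := by positivity
      have h2 : f u / n u * ((c⁻¹)^2 * n p) ≤ (c⁻¹)^2 * f p := by
        rw [← hfu', ← hnu'']; exact h1
      have h3 : (c⁻¹)^2 * (f u / n u * n p) ≤ (c⁻¹)^2 * f p := by
        calc (c⁻¹)^2 * (f u / n u * n p) = f u / n u * ((c⁻¹)^2 * n p) := by ring
          _ ≤ (c⁻¹)^2 * f p := h2
      exact le_of_mul_le_mul_left h3 hk
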